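/- Let H be a real Hilbert space, (x_n) a bounded sequence in H and x ∈ H. Then (x_n) converges weakly to x in the functional-analytic sense (⟨x_n − x, v⟩ → 0 for every v ∈ H) if and only if for every y ∈ H, the nearest-point projections of x_n onto the segment [x, y] converge to x in norm. -/

import Mathlib

open Filter Topology Metric Set

/-- `m` is a midpoint of `x` and `y`. -/
def IsMidpoint {X : Type*} [MetricSpace X] (x y m : X) : Prop :=
  dist x m = dist x y / 2 ∧ dist y m = dist x y / 2

/-- A CAT(0) space: a complete metric space with midpoints satisfying the
CN-inequality of Bruhat–Tits. -/
def IsCAT0 (X : Type*) [MetricSpace X] : Prop :=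
  CompleteSpace X ∧
    (∀ x y : X, ∃ m : X, IsMidpoint x y m) ∧
    (∀ x y z m : X, IsMidpoint x y m →
      dist z m ^ 2 ≤ dist z x ^ 2 / 2 + dist z y ^ 2 / 2 - dist x y ^ 2 / 4)

/-- `G` is a (compact) geodesic segment starting at `x`: the image of an
isometric embedding of a compact interval `[0, L]` whose left endpoint is
mapped to `x`. -/
def IsGeodesicSegmentFrom {X : Type*} [MetricSpace X] (x : X) (G : Set X) : Prop :=
  ∃ (L : ℝ) (γ : ℝ → X), 0 ≤ L ∧ γ 0 = x ∧
    (∀ s ∈ Icc (0:ℝ) L, ∀ t ∈ Icc (0:ℝ) L, dist (γ s) (γ t) = |s - t|) ∧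
    G = γ '' Icc (0:ℝ) L

/-- `G` is a geodesic segment from `x` to `y`. -/
def IsGeodesicSegmentBetween {X : Type*} [MetricSpace X] (x y : X) (G : Set X) : Prop :=
  ∃ γ : ℝ → X, γ 0 = x ∧ γ (dist x y) = y ∧
    (∀ s ∈ Icc (0:ℝ) (dist x y), ∀ t ∈ Icc (0:ℝ) (dist x y),
      dist (γ s) (γ t) = |s - t|) ∧
    G = γ '' Icc (0:ℝ) (dist x y)

/-- `p` is a nearest point of `C` to `z` (a closest-point projection of `z`
onto `C`). -/
def IsNearestPoint {X : Type*} [MetricSpace X] (z : X) (C : Set X) (p : X) : Prop :=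
  p ∈ C ∧ ∀ q ∈ C, dist z p ≤ dist z q

/-- Weak (Δ-)convergence of a net `u` (indexed by a preordered set) to `x`:
for every geodesic segment `G` starting at `x`, the closest-point projections
of the `u i` onto `G` converge to `x` in the metric. -/
def WeakConv {X : Type*} [MetricSpace X] {I : Type*} [Preorder I]
    (u : I → X) (x : X) : Prop :=
  ∀ G : Set X, IsGeodesicSegmentFrom x G →
    ∀ p : I → X, (∀ i, IsNearestPoint (u i) G (p i)) → Tendsto p atTop (𝓝 x)

/-- The sets that are closed in the weak topology `T_Δ`: sets containing all
weak limits of bounded sequences of their elements. -/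
def TdeltaClosed {X : Type*} [MetricSpace X] (A : Set X) : Prop :=
  ∀ u : ℕ → X, (∀ n, u n ∈ A) → Bornology.IsBounded (Set.range u) →
    ∀ x : X, WeakConv u x → x ∈ A

/-- `T` is the weak topology `T_Δ`: its closed sets are exactly the weakly
sequentially closed sets. -/
def IsWeakTopology {X : Type*} [MetricSpace X] (T : TopologicalSpace X) : Prop :=
  ∀ A : Set X, @IsClosed X T A ↔ TdeltaClosed A

/-- Geodesic convexity of a subset of a metric space. -/
def GeodesicallyConvex {X : Type*} [MetricSpace X] (C : Set X) : Prop :=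
  ∀ x ∈ C, ∀ y ∈ C, ∀ G : Set X, IsGeodesicSegmentBetween x y G → G ⊆ C

/-- The coconvex topology `T_co`: the coarsest topology on `X` in which every
metrically closed, (geodesically) convex set is closed. -/
def coconvexTopology (X : Type*) [MetricSpace X] : TopologicalSpace X :=
  TopologicalSpace.generateFrom
    {U : Set X | ∃ C : Set X, IsClosed C ∧ GeodesicallyConvex C ∧ U = Cᶜ}

section Aux
variable {H : Type*} [NormedAddCommGroup H] [InnerProductSpace ℝ H]

lemma sq_dist_expand' (a w : H) (t : ℝ) :
    ‖a - t • w‖ ^ 2 = ‖a‖ ^ 2 - 2 * (t * inner ℝ a w) + t ^ 2 * ‖w‖ ^ 2 := by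
  rw [@norm_sub_sq_real, real_inner_smul_right, norm_smul]
  simp [mul_pow, sq_abs]

lemma clamp_sq (s t' : ℝ) (h0 : 0 ≤ t') (h1 : t' ≤ 1) :
    (max 0 (min 1 s)) ^ 2 - 2 * (max 0 (min 1 s)) * s ≤ t' ^ 2 - 2 * t' * s := by
  rcases le_or_gt s 0 with h | h
  · rw [max_eq_left (le_trans (min_le_right _ _) h)]; nlinarith
  rcases le_or_gt 1 s with h' | h'
  · rw [min_eq_left h', max_eq_right zero_le_one]; nlinarith
  · rw [min_eq_right h'.le, max_eq_right h.le]; nlinarith [sq_nonneg (t' - s)]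

lemma isProj (x w z : H) (hw : w ≠ 0) :
    (x + (max 0 (min 1 ((inner ℝ (z - x) w : ℝ) / ‖w‖ ^ 2))) • w ∈ segment ℝ x (x + w)) ∧
    ∀ q ∈ segment ℝ x (x + w),
      dist z (x + (max 0 (min 1 ((inner ℝ (z - x) w : ℝ) / ‖w‖ ^ 2))) • w) ≤ dist z q := by
  have hW : (0:ℝ) < ‖w‖ ^ 2 := by
    have := norm_pos_iff.mpr hw; positivity
  set s : ℝ := (inner ℝ (z - x) w : ℝ) / ‖w‖ ^ 2 with hs
  set t : ℝ := max 0 (min 1 s) with ht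
  have hSw : (inner ℝ (z - x) w : ℝ) = s * ‖w‖ ^ 2 := by
    rw [hs]; field_simp
  have htmem : t ∈ Icc (0:ℝ) 1 := ⟨le_max_left _ _, max_le zero_le_one (min_le_left _ _)⟩
  constructor
  · rw [segment_eq_image']
    exact ⟨t, htmem, by simp⟩
  · intro q hq
    rw [segment_eq_image'] at hq
    obtain ⟨t', ht', rfl⟩ := hq
    simp only [add_sub_cancel_left]
    have e1 : z - (x + t • w) = (z - x) - t • w := by abel
    have e2 : z - (x + t' • w) = (z - x) - t' • w := by abel
    rw [dist_eq_norm, dist_eq_norm, e1, e2]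
    have key : ‖(z - x) - t • w‖ ^ 2 ≤ ‖(z - x) - t' • w‖ ^ 2 := by
      rw [sq_dist_expand', sq_dist_expand', hSw]
      have hkey := clamp_sq s t' ht'.1 ht'.2
      have hmul := mul_le_mul_of_nonneg_right hkey hW.le
      rw [← ht] at hmul
      nlinarith [hmul]
    nlinarith [norm_nonneg ((z - x) - t • w), norm_nonneg ((z - x) - t' • w)]

end Aux

/-- In a real Hilbert space, a bounded sequence converges
weakly to `x` in the functional-analytic sense iff for every `y` the nearest
point projections of the sequence onto the segment `[x, y]` converge to `x`
in norm. -/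
theorem hilbert_weak_convergence_iff_projections
    (H : Type*) [NormedAddCommGroup H] [InnerProductSpace ℝ H] [CompleteSpace H]
    (u : ℕ → H) (hb : Bornology.IsBounded (Set.range u)) (x : H) :
    (∀ v : H, Filter.Tendsto (fun n => (inner ℝ (u n - x) v : ℝ))
        Filter.atTop (𝓝 0))
      ↔
    (∀ y : H, ∀ p : ℕ → H,
        (∀ n, p n ∈ segment ℝ x y ∧
          ∀ q ∈ segment ℝ x y, dist (u n) (p n) ≤ dist (u n) q) →
        Filter.Tendsto p Filter.atTop (𝓝 x)) := by
  constructor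
  · -- weak convergence → projections converge
    intro hw y p hp
    have hbd : ∀ n, dist (p n) x ^ 2 ≤ 2 * |(inner ℝ (u n - x) (y - x) : ℝ)| := by
      intro n
      obtain ⟨hmem, hmin⟩ := hp n
      rw [segment_eq_image'] at hmem
      obtain ⟨t, ht, hpe⟩ := hmem
      have h1 := hmin x (left_mem_segment ℝ x y)
      rw [dist_eq_norm, dist_eq_norm] at h1
      have e : u n - p n = (u n - x) - t • (y - x) := by rw [← hpe]; dsimp only; abel
      have hsq : ‖(u n - x) - t • (y - x)‖ ^ 2 ≤ ‖u n - x‖ ^ 2 := by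
        rw [← e]
        exact pow_le_pow_left₀ (norm_nonneg _) h1 2
      rw [sq_dist_expand'] at hsq
      have hdist : dist (p n) x = ‖t • (y - x)‖ := by
        rw [dist_eq_norm, ← hpe, add_sub_cancel_left]
      have hnt : ‖t • (y - x)‖ ^ 2 = t ^ 2 * ‖y - x‖ ^ 2 := by
        rw [norm_smul]; simp [mul_pow, sq_abs]
      rw [hdist, hnt]
      set S : ℝ := (inner ℝ (u n - x) (y - x) : ℝ) with hS
      have h2 : t * S ≤ t * |S| := mul_le_mul_of_nonneg_left (le_abs_self S) ht.1
      have h3 : t * |S| ≤ 1 * |S| := mul_le_mul_of_nonneg_right ht.2 (abs_nonneg S)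
      nlinarith
    rw [tendsto_iff_dist_tendsto_zero]
    have h0 : Tendsto (fun n => 2 * |(inner ℝ (u n - x) (y - x) : ℝ)|) atTop (𝓝 0) := by
      have := ((hw (y - x)).abs).const_mul (2:ℝ)
      simpa using this
    have hsqrt : Tendsto (fun n => Real.sqrt (2 * |(inner ℝ (u n - x) (y - x) : ℝ)|))
        atTop (𝓝 0) := by
      have := (Real.continuous_sqrt.tendsto 0).comp h0
      simpa only [Function.comp_def, Real.sqrt_zero] using this
    refine squeeze_zero (fun n => dist_nonneg) (fun n => ?_) hsqrt
    exact (Real.le_sqrt dist_nonneg (by positivity)).mpr (hbd n)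
  · -- projections converge → weak convergence
    intro h v
    rcases eq_or_ne v 0 with rfl | hv
    · simpa using (tendsto_const_nhds : Tendsto (fun _ : ℕ => (0:ℝ)) atTop (𝓝 0))
    have key : ∀ w : H, w ≠ 0 → ∀ ε : ℝ, 0 < ε →
        ∀ᶠ n in atTop, (inner ℝ (u n - x) w : ℝ) < ε * ‖w‖ ^ 2 := by
      intro w hw ε hε
      set c : ℕ → ℝ := fun n => max 0 (min 1 ((inner ℝ (u n - x) w : ℝ) / ‖w‖ ^ 2)) with hc
      have hp : Tendsto (fun n => x + c n • w) atTop (𝓝 x) := by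
        refine h (x + w) _ (fun n => ?_)
        exact isProj x w (u n) hw
      have hwpos : (0:ℝ) < ‖w‖ := norm_pos_iff.mpr hw
      have heq : ∀ n, c n = dist (x + c n • w) x / ‖w‖ := by
        intro n
        rw [dist_eq_norm, add_sub_cancel_left, norm_smul, Real.norm_eq_abs,
          abs_of_nonneg (le_max_left _ _)]
        field_simp
      have hd := (tendsto_iff_dist_tendsto_zero).mp hp
      have hc0 : Tendsto c atTop (𝓝 0) := by
        have h2 : Tendsto (fun n => dist (x + c n • w) x / ‖w‖) atTop (𝓝 0) := by
          simpa using hd.div_const ‖w‖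
        exact h2.congr (fun n => (heq n).symm)
      have hlt : ∀ᶠ n in atTop, c n < min 1 ε :=
        hc0.eventually_lt_const (lt_min one_pos hε)
      filter_upwards [hlt] with n hn
      by_contra hge
      push_neg at hge
      have hs : ε ≤ (inner ℝ (u n - x) w : ℝ) / ‖w‖ ^ 2 := by
        rw [le_div_iff₀ (by positivity)]; linarith
      have : min 1 ε ≤ c n :=
        le_trans (min_le_min le_rfl hs) (le_max_right _ _)
      linarith
    rw [NormedAddCommGroup.tendsto_nhds_zero]
    intro ε hε
    have hwsq : (0:ℝ) < ‖v‖ ^ 2 := by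
      have := norm_pos_iff.mpr hv; positivity
    have h1 := key v hv (ε / ‖v‖ ^ 2) (by positivity)
    have h2 := key (-v) (neg_ne_zero.mpr hv) (ε / ‖v‖ ^ 2) (by positivity)
    filter_upwards [h1, h2] with n hn1 hn2
    rw [Real.norm_eq_abs, abs_lt]
    rw [inner_neg_right, norm_neg] at hn2
    have hc : ε / ‖v‖ ^ 2 * ‖v‖ ^ 2 = ε := div_mul_cancel₀ ε (ne_of_gt hwsq)
    constructor <;> linarith
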